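/- Let p be a prime and G a finite p-group containing an abelian subgroup G' of index p (such a subgroup is automatically normal in G). Then every irreducible finite-dimensional complex representation ρ of G satisfies one of the following: either ρ is one-dimensional (so its character is a group homomorphism G → ℂˣ, inflated from a character of the abelianization G^{ab}), or there exists a group homomorphism β : G' → ℂˣ such that the character of ρ equals the induced class function Ind_{G'}^G β. -/

import Mathlib

open scoped Classical

/-- The class function on `G` induced from a complex-valued function `φ` on a
subgroup `W ≤ G`: `(Ind_W^G φ)(g) = |W|⁻¹ ∑_{x ∈ G, x⁻¹gx ∈ W} φ(x⁻¹gx)`. -/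
noncomputable def indCF {G : Type*} [Group G] (W : Subgroup G) (φ : W → ℂ) : G → ℂ :=
  fun g => (Nat.card W : ℂ)⁻¹ *
    ∑ᶠ x : G, if h : x⁻¹ * g * x ∈ W then φ ⟨x⁻¹ * g * x, h⟩ else 0

/-- A finite-dimensional complex representation is irreducible if it is nonzero and has
no invariant subspaces other than `0` and the whole space. -/
def IsIrreducibleRep {G V : Type*} [Group G] [AddCommGroup V] [Module ℂ V]
    (ρ : Representation ℂ G V) : Prop :=
  (∃ v : V, v ≠ 0) ∧
    ∀ p : Submodule ℂ V, (∀ (g : G), ∀ v ∈ p, ρ g v ∈ p) → p = ⊥ ∨ p = ⊤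

lemma aux_eq_or_top {G : Type*} [Group G] {H K : Subgroup G} (hHK : H ≤ K)
    (hp : H.index.Prime) : K = H ∨ K = ⊤ := by
  have hrel := Subgroup.relIndex_mul_index hHK
  rcases hp.eq_one_or_self_of_dvd K.index ⟨H.relIndex K, by rw [← hrel, mul_comm]⟩ with h1 | h2
  · exact Or.inr (Subgroup.index_eq_one.mp h1)
  · left
    have h3 : H.relIndex K * H.index = 1 * H.index := by rw [one_mul, ← h2]; exact h2 ▸ hrel
    have h4 : H.relIndex K = 1 := Nat.eq_of_mul_eq_mul_right hp.pos h3
    exact le_antisymm (Subgroup.relIndex_eq_one.mp h4) hHK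

/-- Subgroup of elements preserving a submodule. -/
def presSubgroup {G V : Type*} [Group G] [Finite G] [AddCommGroup V] [Module ℂ V]
    (ρ : Representation ℂ G V) (W : Submodule ℂ V) : Subgroup G where
  carrier := {g | ∀ w ∈ W, ρ g w ∈ W}
  one_mem' := by intro w hw; simpa using hw
  mul_mem' := by
    intro a b ha hb w hw
    rw [map_mul]
    exact ha _ (hb _ hw)
  inv_mem' := by
    intro g hg
    have hpow : ∀ n : ℕ, ∀ w ∈ W, ρ (g ^ n) w ∈ W := by
      intro n
      induction n with
      | zero => intro w hw; simpa using hw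
      | succ n ih =>
        intro w hw
        rw [pow_succ, map_mul]
        exact ih _ (hg _ hw)
    intro w hw
    have h1 : g⁻¹ = g ^ (orderOf g - 1) := by
      apply inv_eq_of_mul_eq_one_left
      rw [← pow_succ, Nat.sub_add_cancel (Nat.one_le_iff_ne_zero.mpr (orderOf_pos g).ne'),
        pow_orderOf_eq_one]
    rw [h1]
    exact hpow _ w hw

lemma mem_presSubgroup_iff {G V : Type*} [Group G] [Finite G] [AddCommGroup V] [Module ℂ V]
    (ρ : Representation ℂ G V) (W : Submodule ℂ V) (g : G) :
    g ∈ presSubgroup ρ W ↔ ∀ w ∈ W, ρ g w ∈ W := Iff.rfl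

/-- Subgroup of elements acting by scalars. -/
def scalarSubgroup {G V : Type*} [Group G] [Finite G] [AddCommGroup V] [Module ℂ V]
    (ρ : Representation ℂ G V) : Subgroup G where
  carrier := {g | ∃ c : ℂ, ∀ w : V, ρ g w = c • w}
  one_mem' := ⟨1, by simp⟩
  mul_mem' := by
    rintro a b ⟨ca, hca⟩ ⟨cb, hcb⟩
    refine ⟨ca * cb, fun w => ?_⟩
    rw [map_mul, Module.End.mul_apply, hcb, map_smul, hca, smul_smul, mul_comm]
  inv_mem' := by
    rintro g ⟨c, hc⟩
    have hpow : ∀ n : ℕ, ∃ d : ℂ, ∀ w : V, ρ (g ^ n) w = d • w := by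
      intro n
      induction n with
      | zero => exact ⟨1, by simp⟩
      | succ n ih =>
        obtain ⟨d, hd⟩ := ih
        refine ⟨d * c, fun w => ?_⟩
        rw [pow_succ, map_mul, Module.End.mul_apply, hc, map_smul, hd, smul_smul, mul_comm]
    have h1 : g⁻¹ = g ^ (orderOf g - 1) := by
      apply inv_eq_of_mul_eq_one_left
      rw [← pow_succ, Nat.sub_add_cancel (Nat.one_le_iff_ne_zero.mpr (orderOf_pos g).ne'),
        pow_orderOf_eq_one]
    rw [h1]
    exact hpow _



lemma exists_common_eigen {A V : Type*} [Group A] [Finite A] [AddCommGroup V] [Module ℂ V]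
    [FiniteDimensional ℂ V] (ρ : Representation ℂ A V)
    (hcomm : ∀ a b : A, a * b = b * a) (hV : ∃ v : V, v ≠ 0) :
    ∃ (lam : A →* ℂˣ) (v : V), v ≠ 0 ∧ ∀ a : A, ρ a v = (lam a : ℂ) • v := by
  obtain ⟨v1, hv1⟩ := hV
  haveI : Nontrivial V := ⟨v1, 0, hv1⟩
  set P : Submodule ℂ V → Prop :=
    fun W => W ≠ ⊥ ∧ ∀ a : A, ∀ w ∈ W, ρ a w ∈ W with hP
  have hex : ∃ n, ∃ W, P W ∧ Module.finrank ℂ W = n :=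
    ⟨_, ⊤, ⟨by simp, fun a w _ => trivial⟩, rfl⟩
  obtain ⟨W, hPW, hrank⟩ := Nat.find_spec hex
  have hmin : ∀ W' : Submodule ℂ V, P W' → Module.finrank ℂ W ≤ Module.finrank ℂ W' := by
    intro W' hW'
    rw [hrank]
    exact Nat.find_min' hex ⟨W', hW', rfl⟩
  have key : ∀ a : A, ∃ c : ℂ, ∀ w ∈ W, ρ a w = c • w := by
    intro a
    haveI : Nontrivial W := Submodule.nontrivial_iff_ne_bot.mpr hPW.1
    set f : Module.End ℂ W := (ρ a).restrict (hPW.2 a)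
    obtain ⟨c, hc⟩ := Module.End.exists_eigenvalue f
    obtain ⟨w0, hw0⟩ := hc.exists_hasEigenvector
    set E : Submodule ℂ V := W ⊓ Module.End.eigenspace (ρ a) c with hE
    have hEW : E ≤ W := inf_le_left
    have hPE : P E := by
      constructor
      · intro hbot
        have hmem : (w0 : V) ∈ E := by
          refine Submodule.mem_inf.mpr ⟨w0.2, ?_⟩
          rw [Module.End.mem_eigenspace_iff]
          have := hw0.apply_eq_smul
          calc ρ a (w0 : V) = ((f w0 : W) : V) := rfl
            _ = c • (w0 : V) := by rw [this]; rfl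
        rw [hbot] at hmem
        exact hw0.2 (by exact_mod_cast (Submodule.mem_bot ℂ).mp hmem)
      · intro b w hw
        obtain ⟨hw1, hw2⟩ := Submodule.mem_inf.mp hw
        refine Submodule.mem_inf.mpr ⟨hPW.2 b w hw1, ?_⟩
        rw [Module.End.mem_eigenspace_iff]
        have h1 : ρ a (ρ b w) = ρ b (ρ a w) := by
          rw [← Module.End.mul_apply, ← map_mul, hcomm a b, map_mul, Module.End.mul_apply]
        rw [h1, (Module.End.mem_eigenspace_iff).mp hw2, map_smul]
    have hWE : W = E :=
      (Submodule.eq_of_le_of_finrank_le hEW (hmin E hPE)).symm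
    refine ⟨c, fun w hw => ?_⟩
    have hwE : w ∈ E := hWE ▸ hw
    exact Module.End.mem_eigenspace_iff.mp (Submodule.mem_inf.mp hwE).2
  choose cf hcf using key
  obtain ⟨v, hvW, hv⟩ := Submodule.exists_mem_ne_zero_of_ne_bot hPW.1
  have hinj : ∀ c d : ℂ, c • v = d • v → c = d := by
    intro c d h
    by_contra hne
    have : (c - d) • v = 0 := by rw [sub_smul, h, sub_self]
    exact hv ((smul_eq_zero.mp this).resolve_left (sub_ne_zero.mpr hne))
  have h1 : cf 1 = 1 := by
    apply hinj
    rw [← hcf 1 v hvW, map_one, one_smul]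
    rfl
  have hmul : ∀ a b : A, cf (a * b) = cf a * cf b := by
    intro a b
    apply hinj
    rw [← hcf (a * b) v hvW, map_mul, Module.End.mul_apply, hcf b v hvW, map_smul,
      hcf a v hvW, smul_smul, mul_comm (cf a)]
  set φ : A →* ℂ := { toFun := cf, map_one' := h1, map_mul' := hmul }
  refine ⟨φ.toHomUnits, v, hv, fun a => ?_⟩
  rw [MonoidHom.coe_toHomUnits]
  exact hcf a v hvW

lemma eigen_linearIndependent {A V ι : Type*} [Group A] [AddCommGroup V] [Module ℂ V]
    (ρ : Representation ℂ A V) (χ : ι → A → ℂ) (v : ι → V)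
    (h0 : ∀ i, v i ≠ 0) (hev : ∀ i a, ρ a (v i) = χ i a • v i)
    (hd : ∀ i j, i ≠ j → χ i ≠ χ j) (s : Finset ι) :
    ∀ f : ι → ℂ, ∑ i ∈ s, f i • v i = 0 → ∀ i ∈ s, f i = 0 := by
  induction s using Finset.induction_on with
  | empty => intro f _ i hi; simp at hi
  | insert j s hj ih =>
    intro f hsum
    have hkey : ∀ a : A, ∑ i ∈ s, (f i * (χ i a - χ j a)) • v i = 0 := by
      intro a
      have h2 : ρ a (∑ i ∈ insert j s, f i • v i) - χ j a • (∑ i ∈ insert j s, f i • v i)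
          = 0 := by rw [hsum]; simp
      rw [map_sum, Finset.smul_sum, ← Finset.sum_sub_distrib] at h2
      have h3 : ∀ i ∈ insert j s, ρ a (f i • v i) - χ j a • (f i • v i)
          = (f i * (χ i a - χ j a)) • v i := by
        intro i _
        rw [map_smul, hev i a, smul_smul, smul_smul, mul_sub, ← sub_smul]
        ring_nf
      rw [Finset.sum_congr rfl h3, Finset.sum_insert hj] at h2
      have h4 : (f j * (χ j a - χ j a)) • v j = 0 := by simp
      rw [h4, zero_add] at h2
      exact h2
    have hzero : ∀ i ∈ s, f i = 0 := by
      intro i hi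
      have hne : χ i ≠ χ j := hd i j (fun h => hj (h ▸ hi))
      obtain ⟨a, ha⟩ := Function.ne_iff.mp hne
      have := ih (fun i => f i * (χ i a - χ j a)) (hkey a) i hi
      rcases mul_eq_zero.mp this with h | h
      · exact h
      · exact absurd (sub_eq_zero.mp h) ha
    intro i hi
    rcases Finset.mem_insert.mp hi with rfl | his
    · have h5 : ∑ x ∈ s, f x • v x = 0 :=
        Finset.sum_eq_zero fun x hx => by rw [hzero x hx, zero_smul]
      rw [Finset.sum_insert hj, h5, add_zero] at hsum
      exact (smul_eq_zero.mp hsum).resolve_right (h0 i)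
    · exact hzero i his



/-- Let `p` be a prime and `G` a finite `p`-group with an abelian subgroup `G'` of
index `p`. Then `G'` is normal in `G`, and every irreducible finite-dimensional complex
representation `ρ` of `G` is either one-dimensional (so its character is a group
homomorphism `G → ℂˣ`) or its character is induced from a one-dimensional character
`β : G' → ℂˣ`. -/
theorem irreducible_of_abelian_index_p {p : ℕ} (hp : p.Prime) {G : Type*} [Group G]
    [Finite G] (hG : IsPGroup p G) (G' : Subgroup G) (hab : IsMulCommutative G')
    (hidx : G'.index = p)
    (V : Type*) [AddCommGroup V] [Module ℂ V] [FiniteDimensional ℂ V]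
    (ρ : Representation ℂ G V) (hirr : IsIrreducibleRep ρ) :
    G'.Normal ∧
      ((Module.finrank ℂ V = 1 ∧
          ∃ α : G →* ℂˣ, ∀ g : G, LinearMap.trace ℂ V (ρ g) = α g) ∨
        (∃ β : G' →* ℂˣ, ∀ g : G,
          LinearMap.trace ℂ V (ρ g) = indCF G' (fun u => ((β u : ℂˣ) : ℂ)) g)) := by
  haveI : Fact p.Prime := ⟨hp⟩
  haveI : Fintype G := Fintype.ofFinite G
  haveI := hab
  have hidx_ne : G' ≠ ⊤ := by
    intro h
    rw [h, Subgroup.index_top] at hidx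
    exact hp.one_lt.ne' hidx.symm
  have hPrimeIdx : G'.index.Prime := hidx ▸ hp
  have hnormal : G'.Normal := by
    have hnc : NormalizerCondition G := normalizerCondition_of_isNilpotent (h := hG.isNilpotent)
    rcases aux_eq_or_top Subgroup.le_normalizer hPrimeIdx with h | h
    · exfalso
      have h2 := hnc G' (lt_top_iff_ne_top.mpr hidx_ne)
      rw [h] at h2
      exact lt_irrefl _ h2
    · exact Subgroup.normalizer_eq_top_iff.mp h
  haveI := hnormal
  refine ⟨hnormal, ?_⟩
  -- common eigenvector for the abelian subgroup
  have hcommA : ∀ a b : ↥G', a * b = b * a := fun a b => hab.is_comm.comm a b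
  obtain ⟨lam, v₀, hv₀, hlam0⟩ :=
    exists_common_eigen (ρ.comp G'.subtype)
      hcommA hirr.1
  have hlam : ∀ a : ↥G', ρ (↑a) v₀ = ((lam a : ℂˣ) : ℂ) • v₀ := fun a => hlam0 a
  -- an element outside G'
  have hex_g₀ : ∃ g : G, g ∉ G' := by
    by_contra h
    push_neg at h
    exact hidx_ne (Subgroup.eq_top_iff' G' |>.mpr h)
  obtain ⟨g₀, hg₀⟩ := hex_g₀
  -- conjugation stays in G'
  have hconj : ∀ (x : G) (a : ↥G'), x⁻¹ * ↑a * x ∈ G' := by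
    intro x a
    simpa using hnormal.conj_mem ↑a a.2 x⁻¹
  set lamF : ↥G' → ℂ := fun a => ((lam a : ℂˣ) : ℂ) with hlamF_def
  set cl : G → ↥G' → ℂ := fun x a => ((lam ⟨x⁻¹ * ↑a * x, hconj x a⟩ : ℂˣ) : ℂ) with hcl_def
  have hcomm' : ∀ x y : G, x ∈ G' → y ∈ G' → x * y = y * x := fun x y hx hy =>
    Subgroup.mul_comm_of_mem_isMulCommutative G' hx hy
  have hclG' : ∀ (u a : ↥G'), cl ↑u a = lamF a := by
    intro u a
    have h1 : ((↑u)⁻¹ * ↑a * ↑u : G) = ↑a := by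
      rw [mul_assoc, hcomm' _ _ a.2 u.2, inv_mul_cancel_left]
    simp only [hcl_def, hlamF_def]
    congr 1
    exact congrArg lam (Subtype.ext h1)
  have hclM : ∀ (m n : ℕ) (a : ↥G'), cl (g₀ ^ (m + n)) a
      = cl (g₀ ^ n) ⟨(g₀ ^ m)⁻¹ * ↑a * g₀ ^ m, hconj (g₀ ^ m) a⟩ := by
    intro m n a
    have h1 : ((g₀ ^ (m + n))⁻¹ * ↑a * g₀ ^ (m + n) : G)
        = (g₀ ^ n)⁻¹ * ((g₀ ^ m)⁻¹ * ↑a * g₀ ^ m) * g₀ ^ n := by rw [pow_add]; group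
    simp only [hcl_def]
    congr 1
    exact congrArg lam (Subtype.ext h1)
  -- quotient facts
  have horder : orderOf ((g₀ : G) : G ⧸ G') = p := by
    refine orderOf_eq_prime ?_ ?_
    · have h1 := pow_card_eq_one' (x := ((g₀ : G) : G ⧸ G'))
      rwa [← Subgroup.index_eq_card, hidx] at h1
    · rw [Ne, QuotientGroup.eq_one_iff]
      exact hg₀
  have hpow_mem : ∀ k : ℕ, g₀ ^ k ∈ G' ↔ p ∣ k := by
    intro k
    rw [← QuotientGroup.eq_one_iff (g₀ ^ k), QuotientGroup.mk_pow,
      ← horder, orderOf_dvd_iff_pow_eq_one]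
  have hdecomp : ∀ g : G, ∃ m : ℕ, m < p ∧ (g₀ ^ m)⁻¹ * g ∈ G' := by
    intro g
    have hz : Subgroup.zpowers ((g₀ : G) : G ⧸ G') = ⊤ := by
      apply Subgroup.eq_top_of_card_eq
      rw [Nat.card_zpowers, horder, ← Subgroup.index_eq_card, hidx]
    have hq : ((g : G) : G ⧸ G') ∈ Subgroup.zpowers ((g₀ : G) : G ⧸ G') := by
      rw [hz]; trivial
    obtain ⟨k, hk⟩ := (isOfFinOrder_of_finite _).mem_powers_iff_mem_zpowers.mpr hq
    refine ⟨k % p, Nat.mod_lt _ hp.pos, ?_⟩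
    rw [← QuotientGroup.eq, QuotientGroup.mk_pow, ← horder, pow_mod_orderOf]
    simpa using hk
  -- the main eigenvalue-moving fact
  have hF1 : ∀ (x : G) (w : V), (∀ a : ↥G', ρ ↑a w = lamF a • w) →
      ∀ b : ↥G', ρ (↑b) (ρ x w) = cl x b • ρ x w := by
    intro x w hw b
    have h1 : (↑b : G) * x = x * (x⁻¹ * ↑b * x) := by group
    calc ρ (↑b) (ρ x w) = ρ (↑b * x) w := by rw [map_mul]; rfl
      _ = ρ (x * (x⁻¹ * ↑b * x)) w := by rw [← h1]
      _ = ρ x (ρ (x⁻¹ * ↑b * x) w) := by rw [map_mul]; rfl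
      _ = ρ x (lamF ⟨x⁻¹ * ↑b * x, hconj x b⟩ • w) := by
          rw [hw ⟨x⁻¹ * ↑b * x, hconj x b⟩]
      _ = cl x b • ρ x w := by rw [map_smul]
  by_cases hC : cl g₀ = lamF
  · -- Case A: one-dimensional
    left
    set Vlam : Submodule ℂ V :=
      { carrier := {w | ∀ a : ↥G', ρ (↑a) w = lamF a • w}
        add_mem' := by intro x y hx hy a; rw [map_add, hx a, hy a, smul_add]
        zero_mem' := by intro a; rw [map_zero, smul_zero]
        smul_mem' := by intro c x hx a; rw [map_smul, hx a, smul_comm] } with hVlam_def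
    have hv₀mem : v₀ ∈ Vlam := fun a => hlam a
    have hsub : G' ≤ presSubgroup ρ Vlam := by
      intro u hu w hw b
      rw [hF1 u w hw b]
      congr 1
      exact hclG' ⟨u, hu⟩ b
    have hg₀P : g₀ ∈ presSubgroup ρ Vlam := by
      intro w hw b
      rw [hF1 g₀ w hw b]
      congr 1
      exact congrFun hC b
    have htop : presSubgroup ρ Vlam = ⊤ := by
      rcases aux_eq_or_top hsub hPrimeIdx with h | h
      · exact absurd (h ▸ hg₀P) hg₀
      · exact h
    have hVtop : Vlam = ⊤ := by
      rcases hirr.2 Vlam (fun g w hw => by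
        have hg : g ∈ presSubgroup ρ Vlam := by rw [htop]; trivial
        exact hg w hw) with h | h
      · exfalso
        rw [h, Submodule.mem_bot] at hv₀mem
        exact hv₀ hv₀mem
      · exact h
    have hscal : ∀ (a : ↥G') (w : V), ρ (↑a) w = lamF a • w := by
      intro a w
      have hw : w ∈ Vlam := by rw [hVtop]; trivial
      exact hw a
    haveI : Nontrivial V := ⟨v₀, 0, hv₀⟩
    obtain ⟨c, hc⟩ := Module.End.exists_eigenvalue (ρ g₀ : Module.End ℂ V)
    set E := Module.End.eigenspace (ρ g₀ : Module.End ℂ V) c with hE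
    have hsubE : G' ≤ presSubgroup ρ E := by
      intro u hu w hw
      rw [Module.End.mem_eigenspace_iff] at hw ⊢
      have h2 : ρ u w = lamF ⟨u, hu⟩ • w := hscal ⟨u, hu⟩ w
      rw [h2, map_smul, hw, smul_comm]
    have hg₀E : g₀ ∈ presSubgroup ρ E := by
      intro w hw
      rw [Module.End.mem_eigenspace_iff] at hw ⊢
      rw [hw, map_smul, hw]
    have htopE : presSubgroup ρ E = ⊤ := by
      rcases aux_eq_or_top hsubE hPrimeIdx with h | h
      · exact absurd (h ▸ hg₀E) hg₀
      · exact h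
    have hEtop : E = ⊤ := by
      rcases hirr.2 E (fun g w hw => by
        have hg : g ∈ presSubgroup ρ E := by rw [htopE]; trivial
        exact hg w hw) with h | h
      · exact absurd h hc
      · exact h
    have hg₀scal : ∀ w : V, ρ g₀ w = c • w := by
      intro w
      have hw : w ∈ E := by rw [hEtop]; trivial
      exact Module.End.mem_eigenspace_iff.mp hw
    have hsubS : G' ≤ scalarSubgroup ρ := fun u hu =>
      ⟨lamF ⟨u, hu⟩, fun w => hscal ⟨u, hu⟩ w⟩
    have hg₀S : g₀ ∈ scalarSubgroup ρ := ⟨c, hg₀scal⟩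
    have htopS : scalarSubgroup ρ = ⊤ := by
      rcases aux_eq_or_top hsubS hPrimeIdx with h | h
      · exact absurd (h ▸ hg₀S) hg₀
      · exact h
    have hallscal : ∀ g : G, ∃ d : ℂ, ∀ w : V, ρ g w = d • w := by
      intro g
      have hg : g ∈ scalarSubgroup ρ := by rw [htopS]; trivial
      exact hg
    choose cf hcf using hallscal
    have hspan : Submodule.span ℂ {v₀} = ⊤ := by
      have hinv : ∀ (g : G), ∀ w ∈ Submodule.span ℂ {v₀}, ρ g w ∈ Submodule.span ℂ {v₀} := by
        intro g w hw
        rw [hcf g w]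
        exact Submodule.smul_mem (Submodule.span ℂ {v₀}) (cf g) hw
      rcases hirr.2 (Submodule.span ℂ {v₀}) hinv with h | h
      · exfalso
        have := Submodule.mem_span_singleton_self (R := ℂ) v₀
        rw [h, Submodule.mem_bot] at this
        exact hv₀ this
      · exact h
    have hrk : Module.finrank ℂ V = 1 := by
      rw [← finrank_top ℂ V, ← hspan]
      exact finrank_span_singleton hv₀
    have hinj : ∀ x y : ℂ, x • v₀ = y • v₀ → x = y := by
      intro x y h
      by_contra hne
      have h2 : (x - y) • v₀ = 0 := by rw [sub_smul, h, sub_self]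
      exact hv₀ ((smul_eq_zero.mp h2).resolve_left (sub_ne_zero.mpr hne))
    have h1 : cf 1 = 1 := by
      apply hinj
      rw [← hcf 1 v₀, map_one]
      simp
    have hmul : ∀ g h : G, cf (g * h) = cf g * cf h := by
      intro g h
      apply hinj
      rw [← hcf (g * h) v₀, map_mul, Module.End.mul_apply, hcf h v₀, map_smul,
        hcf g v₀, smul_smul, mul_comm (cf h)]
    set φ : G →* ℂ := { toFun := cf, map_one' := h1, map_mul' := hmul } with hφ
    have htr : ∀ g : G, LinearMap.trace ℂ V (ρ g) = cf g := by
      intro g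
      have h2 : ρ g = cf g • (LinearMap.id : V →ₗ[ℂ] V) := LinearMap.ext fun w => hcf g w
      rw [h2, map_smul, LinearMap.trace_id, hrk]
      simp
    refine ⟨hrk, φ.toHomUnits, fun g => ?_⟩
    rw [htr g]
    exact (congrArg Units.val (rfl : φ.toHomUnits g = φ.toHomUnits g)).trans
      (MonoidHom.coe_toHomUnits φ g) |>.symm
  · -- Case B: induced character
    right
    haveI : Fintype ↥G' := Fintype.ofFinite _
    have hlam1 : ∀ z : ↥G', (z : G) = 1 → lamF z = 1 := by
      intro z hz
      have h1 : z = 1 := Subtype.ext (by rw [hz]; rfl)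
      rw [h1]
      simp [hlamF_def]
    have hcyc : ∀ k : ℕ, cl (g₀ ^ k) = lamF → p ∣ k := by
      intro k hk
      by_contra hnd
      have step1 : ∀ s : ℕ, cl (g₀ ^ (k * s)) = lamF := by
        intro s
        induction s with
        | zero =>
          funext a
          rw [Nat.mul_zero, pow_zero]
          exact hclG' 1 a
        | succ s ih =>
          funext a
          have h1 : k * (s + 1) = k * s + k := by ring
          rw [h1, hclM (k * s) k a, hk]
          have h2 : lamF ⟨(g₀ ^ (k * s))⁻¹ * ↑a * g₀ ^ (k * s), hconj _ a⟩
              = cl (g₀ ^ (k * s)) a := rfl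
          rw [h2, ih]
      have hcop : Nat.Coprime p k := hp.coprime_iff_not_dvd.mpr hnd
      obtain ⟨m, -, hm⟩ := Nat.exists_mul_mod_eq_one_of_coprime hcop.symm hp.one_lt
      have hmt : k * m = p * ((k * m) / p) + 1 := by
        conv_lhs => rw [← Nat.div_add_mod (k * m) p]
        rw [hm]
      set t := (k * m) / p with ht
      have h4 : cl (g₀ ^ (p * t + 1)) = lamF := by rw [← hmt]; exact step1 m
      have hmem : g₀ ^ (p * t) ∈ G' := (hpow_mem _).mpr ⟨t, rfl⟩
      apply hC
      funext a
      have h6 := hclM (p * t) 1 a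
      have h7 : ((g₀ ^ (p * t))⁻¹ * ↑a * g₀ ^ (p * t) : G) = ↑a := by
        rw [mul_assoc, hcomm' _ _ a.2 hmem, inv_mul_cancel_left]
      have h8 : cl (g₀ ^ 1) ⟨(g₀ ^ (p * t))⁻¹ * ↑a * g₀ ^ (p * t), hconj _ a⟩ = cl g₀ a := by
        rw [pow_one]
        exact congrArg (cl g₀) (Subtype.ext h7)
      rw [← h8, ← h6, h4]
    -- basis vectors and characters
    set w : Fin p → V := fun i => ρ (g₀ ^ (i : ℕ)) v₀ with hw_def
    set χ : Fin p → ↥G' → ℂ := fun i => cl (g₀ ^ (i : ℕ)) with hχ_def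
    have hρinj : ∀ (x : G) (z : V), ρ x z = 0 → z = 0 := by
      intro x z hz
      have h1 : ρ x⁻¹ (ρ x z) = z := by
        rw [← Module.End.mul_apply, ← map_mul, inv_mul_cancel, map_one]
        rfl
      rw [hz, map_zero] at h1
      exact h1.symm
    have hw0 : ∀ i, w i ≠ 0 := fun i h => hv₀ (hρinj _ _ h)
    have hev : ∀ (i : Fin p) (a : ↥G'), ρ (↑a) (w i) = χ i a • w i := fun i a =>
      hF1 (g₀ ^ (i : ℕ)) v₀ hlam a
    have hEstep : ∀ i d : ℕ, cl (g₀ ^ (i + d)) = cl (g₀ ^ i) → cl (g₀ ^ d) = lamF := by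
      intro i d h
      funext b
      have hmemb : g₀ ^ i * ↑b * (g₀ ^ i)⁻¹ ∈ G' := hnormal.conj_mem ↑b b.2 (g₀ ^ i)
      have h1 : cl (g₀ ^ i) ⟨g₀ ^ i * ↑b * (g₀ ^ i)⁻¹, hmemb⟩ = lamF b := by
        simp only [hcl_def, hlamF_def]
        congr 1
        refine congrArg lam (Subtype.ext ?_)
        show (g₀ ^ i)⁻¹ * (g₀ ^ i * ↑b * (g₀ ^ i)⁻¹) * g₀ ^ i = (↑b : G)
        group
      have h2 : cl (g₀ ^ (i + d)) ⟨g₀ ^ i * ↑b * (g₀ ^ i)⁻¹, hmemb⟩ = cl (g₀ ^ d) b := by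
        simp only [hcl_def]
        congr 1
        refine congrArg lam (Subtype.ext ?_)
        show (g₀ ^ (i + d))⁻¹ * (g₀ ^ i * ↑b * (g₀ ^ i)⁻¹) * g₀ ^ (i + d)
            = (g₀ ^ d)⁻¹ * ↑b * g₀ ^ d
        rw [pow_add]
        group
      rw [← h2, h, h1]
    have hdist : ∀ i j : Fin p, i ≠ j → χ i ≠ χ j := by
      have haux : ∀ i j : ℕ, i < j → j < p → cl (g₀ ^ i) = cl (g₀ ^ j) → False := by
        intro i j hij hjp h
        have hd : i + (j - i) = j := by omega
        have h1 : cl (g₀ ^ (j - i)) = lamF := hEstep i (j - i) (by rw [hd, h])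
        have h2 := hcyc _ h1
        have h3 := Nat.le_of_dvd (by omega) h2
        omega
      intro i j hne h
      rcases lt_trichotomy (i : ℕ) (j : ℕ) with hlt | heq | hgt
      · exact haux _ _ hlt j.2 h
      · exact hne (Fin.ext heq)
      · exact haux _ _ hgt i.2 h.symm
    have hli : LinearIndependent ℂ w := by
      rw [Fintype.linearIndependent_iff]
      intro f hf i
      exact eigen_linearIndependent (ρ.comp G'.subtype) χ w hw0 hev hdist Finset.univ f
        (by simpa using hf) i (Finset.mem_univ i)
    have hper : ∀ m q : ℕ, ρ (g₀ ^ (m + p * q)) v₀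
        = lamF ⟨g₀ ^ (p * q), (hpow_mem _).mpr ⟨q, rfl⟩⟩ • ρ (g₀ ^ m) v₀ := by
      intro m q
      rw [pow_add, map_mul, Module.End.mul_apply]
      have h5 : ρ (g₀ ^ (p * q)) v₀
          = lamF ⟨g₀ ^ (p * q), (hpow_mem _).mpr ⟨q, rfl⟩⟩ • v₀ :=
        hlam ⟨g₀ ^ (p * q), (hpow_mem _).mpr ⟨q, rfl⟩⟩
      rw [h5, map_smul]
    have hper2 : ∀ n : ℕ, ρ (g₀ ^ n) v₀
        = lamF ⟨g₀ ^ (p * (n / p)), (hpow_mem _).mpr ⟨n / p, rfl⟩⟩ • ρ (g₀ ^ (n % p)) v₀ := by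
      intro n
      conv_lhs => rw [← Nat.mod_add_div n p]
      exact hper (n % p) (n / p)
    set W := Submodule.span ℂ (Set.range w) with hW_def
    have hmap : ∀ g : G, (∀ i : Fin p, ρ g (w i) ∈ W) → ∀ x ∈ W, ρ g x ∈ W := by
      intro g hg x hx
      have h1 : Submodule.map (ρ g) W ≤ W := by
        rw [hW_def, Submodule.map_span, Submodule.span_le]
        rintro y ⟨z, ⟨i, rfl⟩, rfl⟩
        exact hg i
      exact h1 ⟨x, hx, rfl⟩
    have hsubW : G' ≤ presSubgroup ρ W := by
      intro x hx
      refine hmap x (fun i => ?_)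
      have h1 : ρ x (w i) = χ i ⟨x, hx⟩ • w i := hev i ⟨x, hx⟩
      rw [h1]
      exact Submodule.smul_mem W _ (Submodule.subset_span ⟨i, rfl⟩)
    have hg₀W : g₀ ∈ presSubgroup ρ W := by
      refine hmap g₀ (fun i => ?_)
      have h1 : ρ g₀ (w i) = ρ (g₀ ^ ((i : ℕ) + 1)) v₀ := by
        rw [hw_def]
        simp only []
        rw [pow_succ', map_mul]
        rfl
      rw [h1, hper2 ((i : ℕ) + 1)]
      refine Submodule.smul_mem W _ (Submodule.subset_span ?_)
      exact ⟨⟨((i : ℕ) + 1) % p, Nat.mod_lt _ hp.pos⟩, rfl⟩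
    have htopW : presSubgroup ρ W = ⊤ := by
      rcases aux_eq_or_top hsubW hPrimeIdx with h | h
      · exact absurd (h ▸ hg₀W) hg₀
      · exact h
    have hWtop : W = ⊤ := by
      rcases hirr.2 W (fun g x hx => by
        have hg : g ∈ presSubgroup ρ W := by rw [htopW]; trivial
        exact hg x hx) with h | h
      · exfalso
        have h1 : w ⟨0, hp.pos⟩ ∈ W := Submodule.subset_span ⟨⟨0, hp.pos⟩, rfl⟩
        rw [h, Submodule.mem_bot] at h1
        exact hw0 _ h1
      · exact h
    have hsp : ⊤ ≤ Submodule.span ℂ (Set.range w) := by rw [← hW_def, hWtop]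
    set b : Module.Basis (Fin p) ℂ V := Module.Basis.mk hli hsp with hb_def
    have hbw : ∀ i, (b i : V) = w i := fun i => Module.Basis.mk_apply hli hsp i
    have htr : ∀ f : V →ₗ[ℂ] V,
        LinearMap.trace ℂ V f = ∑ i : Fin p, b.repr (f (b i)) i := by
      intro f
      rw [LinearMap.trace_eq_matrix_trace ℂ b f]
      simp [Matrix.trace, Matrix.diag, LinearMap.toMatrix_apply]
    have hrepr : ∀ (i j : Fin p) (c : ℂ), b.repr (c • w j) i = if j = i then c else 0 := by
      intro i j c
      rw [← hbw j, map_smul, Module.Basis.repr_self]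
      simp [Finsupp.single_apply]
    refine ⟨lam, fun g => ?_⟩
    obtain ⟨m, hmp, hmu⟩ := hdecomp g
    set u : ↥G' := ⟨(g₀ ^ m)⁻¹ * g, hmu⟩ with hu_def
    have hgu : g = g₀ ^ m * ↑u := by rw [hu_def]; simp
    have hact : ∀ i : Fin p, ρ g (w i)
        = (χ i u * lamF ⟨g₀ ^ (p * ((m + (i : ℕ)) / p)),
            (hpow_mem _).mpr ⟨(m + (i : ℕ)) / p, rfl⟩⟩)
          • w ⟨(m + (i : ℕ)) % p, Nat.mod_lt _ hp.pos⟩ := by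
      intro i
      have h1 : ρ g (w i) = ρ (g₀ ^ m) (ρ (↑u) (w i)) := by
        rw [hgu, map_mul]
        rfl
      have h2 : ρ (↑u) (w i) = χ i u • w i := hev i u
      have h3 : ρ (g₀ ^ m) (w i) = ρ (g₀ ^ (m + (i : ℕ))) v₀ := by
        rw [hw_def]
        simp only []
        rw [pow_add, map_mul]
        rfl
      rw [h1, h2, map_smul, h3, hper2 (m + (i : ℕ)), smul_smul]
    by_cases hm : m = 0
    · -- g ∈ G'
      subst hm
      have hgG' : g ∈ G' := by simpa using hmu
      have htrg : LinearMap.trace ℂ V (ρ g) = ∑ i : Fin p, χ i u := by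
        rw [htr]
        refine Finset.sum_congr rfl (fun i _ => ?_)
        rw [hbw i, hact i, hrepr]
        have hj : (⟨(0 + (i : ℕ)) % p, Nat.mod_lt _ hp.pos⟩ : Fin p) = i :=
          Fin.ext (by simp [Nat.mod_eq_of_lt i.2])
        rw [if_pos hj]
        have h6 : lamF ⟨g₀ ^ (p * ((0 + (i : ℕ)) / p)),
            (hpow_mem _).mpr ⟨(0 + (i : ℕ)) / p, rfl⟩⟩ = 1 := by
          apply hlam1
          show g₀ ^ (p * ((0 + (i : ℕ)) / p)) = 1
          rw [Nat.zero_add, Nat.div_eq_of_lt i.2, Nat.mul_zero, pow_zero]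
        rw [h6, mul_one]
      set e : Fin p × ↥G' → G := fun it => g₀ ^ ((it.1 : ℕ)) * ↑it.2 with he_def
      have hbij : Function.Bijective e := by
        constructor
        · rintro ⟨i, t⟩ ⟨j, s⟩ h
          simp only [he_def] at h
          have h2 : (g₀ ^ (i : ℕ))⁻¹ * g₀ ^ (j : ℕ) = ↑t * (↑s)⁻¹ := by
            have h3 := congrArg (fun z => (g₀ ^ (i : ℕ))⁻¹ * z * (↑s)⁻¹) h
            simp only [mul_assoc] at h3
            calc (g₀ ^ (i : ℕ))⁻¹ * g₀ ^ (j : ℕ) = (g₀ ^ (i : ℕ))⁻¹ * (g₀ ^ (j : ℕ) * (↑s * (↑s)⁻¹)) := by group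
              _ = (g₀ ^ (i : ℕ))⁻¹ * (g₀ ^ (i : ℕ) * (↑t * (↑s)⁻¹)) := by rw [← h3]
              _ = ↑t * (↑s)⁻¹ := by group
          have hmem2 : (g₀ ^ (i : ℕ))⁻¹ * g₀ ^ (j : ℕ) ∈ G' := by
            rw [h2]
            exact mul_mem t.2 (inv_mem s.2)
          have hij : (i : ℕ) = (j : ℕ) := by
            rcases le_total (i : ℕ) (j : ℕ) with hle | hle
            · have h4 : (g₀ ^ (i : ℕ))⁻¹ * g₀ ^ (j : ℕ) = g₀ ^ ((j : ℕ) - (i : ℕ)) := by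
                have h5 : (i : ℕ) + ((j : ℕ) - (i : ℕ)) = (j : ℕ) := by omega
                rw [← h5, pow_add]
                group
                congr 1
                omega
              rw [h4] at hmem2
              have h6 := (hpow_mem _).mp hmem2
              rcases Nat.eq_zero_or_pos ((j : ℕ) - (i : ℕ)) with h8 | h8
              · omega
              · have := Nat.le_of_dvd h8 h6
                have := j.2
                omega
            · have h4 : (g₀ ^ (i : ℕ))⁻¹ * g₀ ^ (j : ℕ) = (g₀ ^ ((i : ℕ) - (j : ℕ)))⁻¹ := by
                have h5 : (j : ℕ) + ((i : ℕ) - (j : ℕ)) = (i : ℕ) := by omega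
                rw [← h5, pow_add]
                group
                congr 1
                omega
              rw [h4] at hmem2
              have hmem3 := inv_mem hmem2
              rw [inv_inv] at hmem3
              have h6 := (hpow_mem _).mp hmem3
              rcases Nat.eq_zero_or_pos ((i : ℕ) - (j : ℕ)) with h8 | h8
              · omega
              · have := Nat.le_of_dvd h8 h6
                have := i.2
                omega
          have hij' : i = j := Fin.ext hij
          subst hij'
          have h9 : (↑t : G) = ↑s := by
            have := mul_left_cancel h
            exact this
          exact Prod.ext rfl (Subtype.ext h9)
        · intro x
          obtain ⟨m', hm', hmem'⟩ := hdecomp x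
          refine ⟨(⟨m', hm'⟩, ⟨(g₀ ^ m')⁻¹ * x, hmem'⟩), ?_⟩
          simp only [he_def]
          group
      have hterm : ∀ (i : Fin p) (t : ↥G'),
          (if h : (e (i, t))⁻¹ * g * (e (i, t)) ∈ G'
            then ((lam ⟨(e (i, t))⁻¹ * g * (e (i, t)), h⟩ : ℂˣ) : ℂ) else 0) = χ i u := by
        intro i t
        have hz : ((g₀ ^ (i : ℕ))⁻¹ * g * g₀ ^ (i : ℕ) : G) ∈ G' := hconj _ ⟨g, hgG'⟩
        have h7 : ((e (i, t))⁻¹ * g * (e (i, t)) : G)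
            = (g₀ ^ (i : ℕ))⁻¹ * g * g₀ ^ (i : ℕ) := by
          simp only [he_def]
          have h8 := hcomm' _ _ hz t.2
          calc (g₀ ^ (i : ℕ) * ↑t)⁻¹ * g * (g₀ ^ (i : ℕ) * ↑t)
              = (↑t)⁻¹ * ((g₀ ^ (i : ℕ))⁻¹ * g * g₀ ^ (i : ℕ)) * ↑t := by group
            _ = (↑t)⁻¹ * (↑t * ((g₀ ^ (i : ℕ))⁻¹ * g * g₀ ^ (i : ℕ))) := by
                rw [mul_assoc, h8]
            _ = (g₀ ^ (i : ℕ))⁻¹ * g * g₀ ^ (i : ℕ) := by group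
        simp only [h7]
        rw [dif_pos hz]
        show ((lam ⟨(g₀ ^ (i : ℕ))⁻¹ * g * g₀ ^ (i : ℕ), hz⟩ : ℂˣ) : ℂ) = χ i u
        refine congrArg (fun z : ↥G' => ((lam z : ℂˣ) : ℂ)) (Subtype.ext ?_)
        show ((g₀ ^ (i : ℕ))⁻¹ * g * g₀ ^ (i : ℕ) : G)
            = (g₀ ^ (i : ℕ))⁻¹ * ((g₀ ^ 0)⁻¹ * g) * g₀ ^ (i : ℕ)
        rw [pow_zero, inv_one, one_mul]
      have hind : indCF G' (fun a : ↥G' => ((lam a : ℂˣ) : ℂ)) g = ∑ i : Fin p, χ i u := by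
        simp only [indCF]
        rw [finsum_eq_sum_of_fintype]
        rw [← Function.Bijective.sum_comp hbij
          (fun x : G => if h : x⁻¹ * g * x ∈ G'
            then ((lam ⟨x⁻¹ * g * x, h⟩ : ℂˣ) : ℂ) else 0)]
        rw [Fintype.sum_prod_type]
        have h21 : ∀ i : Fin p, ∑ t : ↥G',
            (if h : (e (i, t))⁻¹ * g * (e (i, t)) ∈ G'
              then ((lam ⟨(e (i, t))⁻¹ * g * (e (i, t)), h⟩ : ℂˣ) : ℂ) else 0)
            = (Fintype.card ↥G' : ℂ) * χ i u := by
          intro i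
          rw [Finset.sum_congr rfl (fun t _ => hterm i t), Finset.sum_const, nsmul_eq_mul,
            Finset.card_univ]
        rw [Finset.sum_congr rfl (fun i _ => h21 i), ← Finset.mul_sum, ← mul_assoc,
          Nat.card_eq_fintype_card, inv_mul_cancel₀
            (Nat.cast_ne_zero.mpr Fintype.card_ne_zero), one_mul]
      rw [htrg, hind]
    · -- g ∉ G'
      have hgnot : g ∉ G' := by
        intro hgG
        have hginv : g₀ ^ m ∈ G' := by
          have h9 : (g₀ ^ m : G) = g * (↑u)⁻¹ := by rw [hgu]; group
          rw [h9]
          exact mul_mem hgG (inv_mem u.2)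
        have h10 := (hpow_mem m).mp hginv
        have h11 := Nat.le_of_dvd (Nat.pos_of_ne_zero hm) h10
        omega
      have htr0 : LinearMap.trace ℂ V (ρ g) = 0 := by
        rw [htr]
        refine Finset.sum_eq_zero (fun i _ => ?_)
        rw [hbw i, hact i, hrepr, if_neg]
        intro hji
        have h10 : (m + (i : ℕ)) % p = (i : ℕ) := congrArg Fin.val hji
        have h12 : (m + (i : ℕ)) ≡ (0 + (i : ℕ)) [MOD p] := by
          show (m + (i : ℕ)) % p = (0 + (i : ℕ)) % p
          rw [h10, Nat.zero_add, Nat.mod_eq_of_lt i.2]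
        have h13 : m ≡ 0 [MOD p] := Nat.ModEq.add_right_cancel' _ h12
        have h14 : p ∣ m := (Nat.modEq_zero_iff_dvd).mp h13
        have h15 := Nat.le_of_dvd (Nat.pos_of_ne_zero hm) h14
        omega
      have hind0 : indCF G' (fun a : ↥G' => ((lam a : ℂˣ) : ℂ)) g = 0 := by
        simp only [indCF]
        rw [finsum_eq_sum_of_fintype]
        have hall : ∀ x : G,
            (if h : x⁻¹ * g * x ∈ G'
              then ((lam ⟨x⁻¹ * g * x, h⟩ : ℂˣ) : ℂ) else 0) = 0 := by
          intro x
          rw [dif_neg]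
          intro hmem
          apply hgnot
          have h16 := hnormal.conj_mem _ hmem x
          have h17 : x * (x⁻¹ * g * x) * x⁻¹ = g := by group
          rwa [h17] at h16
        rw [Finset.sum_congr rfl (fun x _ => hall x), Finset.sum_const, smul_zero, mul_zero]
      rw [htr0, hind0]
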